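/- Let M be a module over a commutative ring and let J₁,…,Jₙ be submodules with ⋂ᵢ Jᵢ = {0}. Suppose that for all k with 1 ≤ k ≤ n, ⋂_{i<k}(Jᵢ + J_k) = (⋂_{i<k} Jᵢ) + J_k. Then the canonical map κ : M → M^c = {(mᵢ) ∈ ⊕ᵢ M/Jᵢ | images of mᵢ, mⱼ in M/(Jᵢ+Jⱼ) agree for all i,j} is surjective (hence bijective). -/
import Mathlib


/-- If submodules `J 0, …, J (n-1)` of `M` cover `M` (intersect at zero) and satisfy
the distributivity condition `⋂_{i<k}(Jᵢ + J_k) = (⋂_{i<k} Jᵢ) + J_k` for all `k`,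
then the canonical map `κ : M → M^c` is surjective. -/
theorem covering_completion_surjective_of_net
    {K M : Type*} [CommRing K] [AddCommGroup M] [Module K M] {n : ℕ}
    (J : Fin n → Submodule K M)
    (hcover : (⨅ i, J i) = ⊥)
    (hnet : ∀ k : Fin n,
      (⨅ i : Fin n, ⨅ _ : i < k, (J i ⊔ J k)) =
        (⨅ i : Fin n, ⨅ _ : i < k, J i) ⊔ J k) :
    ∀ f : ∀ i : Fin n, M ⧸ J i,
      (∀ i j : Fin n,
        Submodule.mapQ (J i) (J i ⊔ J j) LinearMap.id
            (by rw [Submodule.comap_id]; exact le_sup_left) (f i) =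
          Submodule.mapQ (J j) (J i ⊔ J j) LinearMap.id
            (by rw [Submodule.comap_id]; exact le_sup_right) (f j)) →
      ∃ m : M, ∀ i : Fin n, (Submodule.Quotient.mk m : M ⧸ J i) = f i := by

  intro f hf
  suffices h : ∀ k : ℕ, k ≤ n → ∃ m : M, ∀ i : Fin n, (i : ℕ) < k →
      (Submodule.Quotient.mk m : M ⧸ J i) = f i by
    obtain ⟨m, hm⟩ := h n le_rfl
    exact ⟨m, fun i => hm i i.2⟩
  intro k hk
  induction k with
  | zero => exact ⟨0, fun i hi => absurd hi (Nat.not_lt_zero _)⟩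
  | succ k ih =>
    obtain ⟨m, hm⟩ := ih (Nat.le_of_succ_le hk)
    have hkn : k < n := hk
    set kk : Fin n := ⟨k, hkn⟩
    obtain ⟨x, hx⟩ := Submodule.Quotient.mk_surjective (J kk) (f kk)
    have hmem : m - x ∈ (⨅ i : Fin n, ⨅ _ : i < kk, J i) ⊔ J kk := by
      rw [← hnet kk]
      refine (Submodule.mem_iInf _).2 fun i => (Submodule.mem_iInf _).2 fun hik => ?_
      have h2 := hf i kk
      rw [← hm i hik, ← hx, Submodule.mapQ_apply, Submodule.mapQ_apply] at h2
      simp only [LinearMap.id_apply] at h2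
      exact (Submodule.Quotient.eq _).1 h2
    obtain ⟨a, ha, b, hb, hab⟩ := Submodule.mem_sup.1 hmem
    refine ⟨m - a, fun i hi => ?_⟩
    rcases Nat.lt_succ_iff_lt_or_eq.1 hi with h | h
    · rw [← hm i h, Submodule.Quotient.eq]
      simpa using (Submodule.mem_iInf _).1 ((Submodule.mem_iInf _).1 ha i)
        (show i < kk from h)
    · have hik : i = kk := Fin.ext h
      subst hik
      rw [← hx, Submodule.Quotient.eq]
      rw [show m - a - x = b by rw [sub_sub, add_comm a x, ← sub_sub, ← hab]; abel]
      exact hb
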